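/- Correctness of the unfolding translation for AU: let K=(V,E,ℓ) be a finite Kripke structure with total E. Define, for states x and sets X ⊆ V with x ∈ X, the predicate S(x,X) by: if some successor x' of x is in X then S(x,X) = (K,x ⊨ ψ); otherwise S(x,X) = (K,x ⊨ ψ) ∨ ((K,x ⊨ φ) ∧ ∀x'. (x,x') ∈ E → S(x', X ∪ {x'})) (well-founded recursion on |V| − |X|). Then K,x ⊨ A φ U ψ iff S(x, {x}). -/

import Mathlib

/-- `K, x ⊨ A φ U ψ` (structure semantics over infinite paths). -/
def SatAU {V : Type*} (E : V → V → Prop) (φ ψ : V → Prop) (x : V) : Prop :=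
  ∀ ρ : ℕ → V, (∀ i, E (ρ i) (ρ (i + 1))) → ρ 0 = x →
    ∃ i, ψ (ρ i) ∧ ∀ j < i, φ (ρ j)

open Classical in
/-- Unfolding predicate for `AU`: if some successor of `x` is in `X` then
`S(x,X) = (x ⊨ ψ)`; otherwise
`S(x,X) = (x ⊨ ψ) ∨ ((x ⊨ φ) ∧ ∀x'. (x,x') ∈ E → S(x', X ∪ {x'}))`,
by well-founded recursion on `|V| − |X|`. -/
noncomputable def SUnf {V : Type*} [Fintype V] [DecidableEq V] (E : V → V → Prop)
    (φ ψ : V → Prop) (x : V) (X : Finset V) : Prop :=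
  if h : ∃ x', E x x' ∧ x' ∈ X then ψ x
  else ψ x ∨ (φ x ∧ ∀ x', E x x' → SUnf E φ ψ x' (insert x' X))
termination_by Fintype.card V - X.card
decreasing_by
  rename_i hE'
  have hx' : x' ∉ X := fun hm => h ⟨x', hE', hm⟩
  have h1 := Finset.card_insert_of_notMem hx'
  have h2 := Finset.card_le_univ (insert x' X)
  try simp [Finset.card_univ] at h2
  omega

section Aux

variable {V : Type*} [Fintype V] [DecidableEq V] {E : V → V → Prop} {φ ψ : V → Prop} {x : V}

/-- If a finite prefix on which `ψ` fails everywhere can be closed into a cycle,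
then `SatAU` fails. -/
lemma au_loop (hsat : SatAU E φ ψ x) (n k : ℕ) (σ : ℕ → V)
    (h0 : σ 0 = x) (hk : k ≤ n)
    (hedge : ∀ j < n, E (σ j) (σ (j+1))) (hloop : E (σ n) (σ k))
    (hψ : ∀ j ≤ n, ¬ ψ (σ j)) : False := by
  set c := n - k + 1 with hc
  have hcpos : 0 < c := by omega
  set g : ℕ → ℕ := fun j => if j ≤ n then j else k + (j - (n+1)) % c with hg
  have hgi : ∀ j, j ≤ n → g j = j := fun j hj => if_pos hj
  have hgi' : ∀ j, n < j → g j = k + (j - (n+1)) % c := fun j hj => if_neg (by omega)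
  have hgle : ∀ j, g j ≤ n := by
    intro j
    by_cases hj : j ≤ n
    · rw [hgi j hj]; exact hj
    · rw [hgi' j (by omega)]
      have := Nat.mod_lt (j - (n+1)) hcpos
      omega
  have hedges : ∀ i, E (σ (g i)) (σ (g (i+1))) := by
    intro i
    rcases lt_trichotomy i n with h | h | h
    · rw [hgi i (by omega), hgi (i+1) (by omega)]
      exact hedge i h
    · subst h
      have h1 : g i = i := hgi i le_rfl
      have h2 : g (i+1) = k := by
        rw [hgi' (i+1) (by omega)]
        simp
      rw [h1, h2]
      exact hloop
    · set m := i - (n+1) with hm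
      have hmc := Nat.mod_lt m hcpos
      have hdm := Nat.div_add_mod m c
      have h1 : g i = k + m % c := hgi' i h
      have h2 : g (i+1) = k + (m+1) % c := by
        rw [hgi' (i+1) (by omega)]
        congr 2
        omega
      by_cases hr : m % c = c - 1
      · have hmul : m + 1 = c * (m / c + 1) := by
          have h' : c * (m / c + 1) = c * (m / c) + c := by ring
          omega
        have hz : (m + 1) % c = 0 := by rw [hmul]; exact Nat.mul_mod_right _ _
        rw [h1, h2, hr, hz]
        have : k + (c - 1) = n := by omega
        rw [this]
        simpa using hloop
      · have hmul : m + 1 = c * (m / c) + (m % c + 1) := by omega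
        have hz : (m + 1) % c = m % c + 1 := by
          rw [hmul, Nat.mul_add_mod]
          exact Nat.mod_eq_of_lt (by omega)
        rw [h1, h2, hz]
        exact hedge (k + m % c) (by omega)
  obtain ⟨i, hi, -⟩ := hsat (fun j => σ (g j)) hedges (by simp only [hgi 0 (Nat.zero_le n)]; exact h0)
  exact hψ (g i) (hgle i) hi

/-- If `ψ` fails along the whole prefix, `φ` must hold at its endpoint. -/
lemma au_ext (hE : ∀ v, ∃ w, E v w) (hsat : SatAU E φ ψ x) (n : ℕ) (σ : ℕ → V)
    (h0 : σ 0 = x) (hedge : ∀ j < n, E (σ j) (σ (j+1)))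
    (hψ : ∀ j ≤ n, ¬ ψ (σ j)) : φ (σ n) := by
  classical
  choose f hf using hE
  set ρ : ℕ → V := fun j => if j ≤ n then σ j else f^[j - n] (σ n) with hρ
  have hρle : ∀ j, j ≤ n → ρ j = σ j := fun j hj => if_pos hj
  have hρge : ∀ j, n ≤ j → ρ j = f^[j - n] (σ n) := by
    intro j hj
    rcases eq_or_lt_of_le hj with h | h
    · subst h; simp [hρ]
    · exact if_neg (by omega)
  have hedges : ∀ i, E (ρ i) (ρ (i+1)) := by
    intro i
    by_cases h : i + 1 ≤ n
    · rw [hρle i (by omega), hρle (i+1) h]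
      exact hedge i (by omega)
    · have hi : n ≤ i := by omega
      rw [hρge i hi, hρge (i+1) (by omega)]
      have hst : i + 1 - n = (i - n) + 1 := by omega
      rw [hst, Function.iterate_succ_apply']
      exact hf _
  obtain ⟨i, hi, hφ⟩ := hsat ρ hedges (by rw [hρle 0 (Nat.zero_le n)]; exact h0)
  have hni : n < i := by
    by_contra h
    exact hψ i (by omega) (by rwa [hρle i (by omega)] at hi)
  have := hφ n hni
  rwa [hρle n le_rfl] at this

/-- Case A: if some successor of the endpoint is already on the prefix, `ψ` holds there. -/
lemma au_caseA (hsat : SatAU E φ ψ x) (n : ℕ) (σ : ℕ → V)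
    (h0 : σ 0 = x) (hedge : ∀ j < n, E (σ j) (σ (j+1)))
    (hψp : ∀ j < n, ¬ ψ (σ j)) (x' : V) (hx' : E (σ n) x')
    (hmem : x' ∈ (Finset.range (n+1)).image σ) : ψ (σ n) := by
  by_contra hψn
  obtain ⟨k, hk, hkx⟩ := Finset.mem_image.mp hmem
  have hk' : k ≤ n := by
    have := Finset.mem_range.mp hk
    omega
  refine au_loop hsat n k σ h0 hk' hedge (by rw [hkx]; exact hx') ?_
  intro j hj
  rcases lt_or_eq_of_le hj with h | h
  · exact hψp j h
  · rw [h]; exact hψn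

lemma au_fwd (hE : ∀ v, ∃ w, E v w) (hsat : SatAU E φ ψ x) :
    ∀ m : ℕ, ∀ X : Finset V, ∀ n : ℕ, ∀ σ : ℕ → V,
      Fintype.card V - X.card ≤ m → σ 0 = x →
      (∀ j < n, E (σ j) (σ (j+1))) → (∀ j < n, φ (σ j)) → (∀ j < n, ¬ ψ (σ j)) →
      X = (Finset.range (n+1)).image σ → SUnf E φ ψ (σ n) X := by
  intro m
  induction m with
  | zero =>
    intro X n σ hm h0 hedge hφp hψp hX
    have hcard : X.card ≤ Fintype.card V := by
      have := Finset.card_le_univ X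
      simpa [Finset.card_univ] using this
    have hXu : X = Finset.univ := Finset.eq_univ_of_card X (by omega)
    obtain ⟨x', hx'⟩ := hE (σ n)
    have hmem : x' ∈ X := hXu ▸ Finset.mem_univ x'
    rw [SUnf, dif_pos ⟨x', hx', hmem⟩]
    exact au_caseA hsat n σ h0 hedge hψp x' hx' (hX ▸ hmem)
  | succ m ih =>
    intro X n σ hm h0 hedge hφp hψp hX
    rw [SUnf]
    split_ifs with hc
    · obtain ⟨x', hx', hmem⟩ := hc
      exact au_caseA hsat n σ h0 hedge hψp x' hx' (hX ▸ hmem)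
    · by_cases hψn : ψ (σ n)
      · exact Or.inl hψn
      have hψle : ∀ j ≤ n, ¬ ψ (σ j) := by
        intro j hj
        rcases lt_or_eq_of_le hj with h | h
        · exact hψp j h
        · rw [h]; exact hψn
      have hφn : φ (σ n) := au_ext hE hsat n σ h0 hedge hψle
      refine Or.inr ⟨hφn, fun x' hx' => ?_⟩
      have hx'X : x' ∉ X := fun hmm => hc ⟨x', hx', hmm⟩
      set σ' : ℕ → V := fun j => if j ≤ n then σ j else x' with hσ'
      have hσ'eq : ∀ j, j ≤ n → σ' j = σ j := fun j hj => if_pos hj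
      have hσ'n1 : σ' (n+1) = x' := if_neg (by omega)
      have key : SUnf E φ ψ (σ' (n+1)) (insert x' X) := by
        apply ih (insert x' X) (n+1) σ'
        · have h1 : (insert x' X).card = X.card + 1 := Finset.card_insert_of_notMem hx'X
          have h2 : (insert x' X).card ≤ Fintype.card V := by
            have := Finset.card_le_univ (insert x' X)
            simpa [Finset.card_univ] using this
          omega
        · rw [hσ'eq 0 (Nat.zero_le n)]; exact h0
        · intro j hj
          rcases Nat.lt_or_ge j n with h' | h'
          · rw [hσ'eq j (by omega), hσ'eq (j+1) (by omega)]
            exact hedge j h'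
          · have hjn : j = n := by omega
            subst hjn
            rw [hσ'eq j le_rfl, hσ'n1]
            exact hx'
        · intro j hj
          rcases Nat.lt_or_ge j n with h' | h'
          · rw [hσ'eq j (by omega)]; exact hφp j h'
          · have hjn : j = n := by omega
            subst hjn
            rw [hσ'eq j le_rfl]; exact hφn
        · intro j hj
          rcases Nat.lt_or_ge j n with h' | h'
          · rw [hσ'eq j (by omega)]; exact hψp j h'
          · have hjn : j = n := by omega
            subst hjn
            rw [hσ'eq j le_rfl]; exact hψn
        · rw [show n + 1 + 1 = (n+1) + 1 from rfl, Finset.range_add_one, Finset.image_insert, hσ'n1]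
          congr 1
          rw [hX]
          refine Finset.image_congr ?_
          intro a ha
          exact (hσ'eq a (by have := Finset.mem_range.mp ha; omega)).symm
      rwa [hσ'n1] at key

end Aux

/-- Correctness of the unfolding translation for `AU`:
`K, x ⊨ A φ U ψ` iff `S(x, {x})`. -/
theorem au_unfolding_correct {V : Type*} [Fintype V] [DecidableEq V]
    (E : V → V → Prop) (hE : ∀ v, ∃ w, E v w) (φ ψ : V → Prop) (x : V) :
    SatAU E φ ψ x ↔ SUnf E φ ψ x {x} := by
  constructor
  · intro hsat
    have := au_fwd hE hsat (Fintype.card V) {x} 0 (fun _ => x)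
      (by omega) rfl (by omega) (by omega) (by omega) (by simp)
    exact this
  · intro hS ρ hρE hρ0
    by_contra hno
    push_neg at hno
    set X : ℕ → Finset V := fun i => (Finset.range (i+1)).image ρ with hXdef
    have main : ∀ i, SUnf E φ ψ (ρ i) (X i) ∧ (∀ j < i, φ (ρ j))
        ∧ (∀ j ≤ i, ∀ k < j, ρ j ≠ ρ k) := by
      intro i
      induction i with
      | zero =>
        refine ⟨?_, by omega, by omega⟩
        have hx0 : X 0 = {x} := by
          simp [hXdef, hρ0]
        rw [hx0, hρ0]
        exact hS
      | succ i ih =>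
        obtain ⟨hS_i, hφ_i, hD⟩ := ih
        have hψi : ¬ ψ (ρ i) := by
          intro h
          obtain ⟨j, hj, hjφ⟩ := hno i h
          exact hjφ (hφ_i j hj)
        rw [SUnf] at hS_i
        split_ifs at hS_i with hcond
        · exact absurd hS_i hψi
        have hnext : ρ (i+1) ∉ X i := fun hm => hcond ⟨ρ (i+1), hρE i, hm⟩
        rcases hS_i with h | ⟨hφi, hrec⟩
        · exact absurd h hψi
        have hXsucc : X (i+1) = insert (ρ (i+1)) (X i) := by
          show (Finset.range (i+1+1)).image ρ = _
          rw [Finset.range_add_one, Finset.image_insert]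
        refine ⟨?_, ?_, ?_⟩
        · rw [hXsucc]
          exact hrec (ρ (i+1)) (hρE i)
        · intro j hj
          rcases Nat.lt_or_ge j i with h' | h'
          · exact hφ_i j h'
          · have : j = i := by omega
            rw [this]; exact hφi
        · intro j hj k hk
          rcases Nat.lt_or_ge j (i+1) with h' | h'
          · exact hD j (by omega) k hk
          · have hji : j = i + 1 := by omega
            subst hji
            intro heq
            apply hnext
            rw [heq]
            exact Finset.mem_image.mpr ⟨k, Finset.mem_range.mpr (by omega), rfl⟩
    obtain ⟨a, b, hab, heq⟩ := Finite.exists_ne_map_eq_of_infinite ρ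
    rcases Nat.lt_or_ge a b with h | h
    · exact (main b).2.2 b le_rfl a h heq.symm
    · have hba : b < a := by omega
      exact (main a).2.2 a le_rfl b hba heq
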